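/- arXiv:2102.04019 — 2 statements merged into one kernel-verified Lean document; each statement's English description precedes it below -/
import Mathlib

section
/- D(c₀) = 1: in the space c₀, the supremum of liminf_n ‖x_n − x‖_∞ over all sequences with ‖x_n‖_∞ = 1 and x_n ⇀ x weakly equals 1. -/
open Filter Topology

/-- Weak convergence of a sequence in a real normed space. -/
def WeakConv {X : Type*} [NormedAddCommGroup X] [NormedSpace ℝ X]
    (x : ℕ → X) (a : X) : Prop :=
  ∀ f : X →L[ℝ] ℝ, Tendsto (fun n => f (x n)) atTop (𝓝 (f a))

/-- The modulus D(X). -/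
noncomputable def Dmod (X : Type*) [NormedAddCommGroup X] [NormedSpace ℝ X] : ℝ :=
  sSup {d : ℝ | ∃ (x : ℕ → X) (a : X), (∀ n, ‖x n‖ = 1) ∧ WeakConv x a ∧
    d = Filter.liminf (fun n => ‖x n - a‖) atTop}

/-- The modulus D̂(X). -/
noncomputable def Dhat (X : Type*) [NormedAddCommGroup X] [NormedSpace ℝ X] : ℝ :=
  sSup {d : ℝ | ∃ (x : ℕ → X) (a : X), (∀ n, ‖x n‖ = 1) ∧ WeakConv x a ∧ d = ‖a‖}

/-- Opial modulus r_X(c). -/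
noncomputable def opialMod (X : Type*) [NormedAddCommGroup X] [NormedSpace ℝ X] (c : ℝ) : ℝ :=
  sInf {r : ℝ | ∃ (x : ℕ → X) (a : X), ‖a‖ ≥ c ∧ WeakConv x 0 ∧
    Filter.liminf (fun n => ‖x n‖) atTop ≥ 1 ∧
    r = Filter.liminf (fun n => ‖x n - a‖) atTop - 1}

open ZeroAtInfty BoundedContinuousFunction

namespace C0aux

/-- coordinate bound -/
lemma abs_apply_le_norm (g : C₀(ℕ, ℝ)) (k : ℕ) : |g k| ≤ ‖g‖ := by
  have := g.toBCF.norm_coe_le_norm k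
  rwa [ZeroAtInftyContinuousMap.norm_toBCF_eq_norm, Real.norm_eq_abs] at this

lemma norm_le_of (g : C₀(ℕ, ℝ)) {C : ℝ} (hC : 0 ≤ C) (h : ∀ k, |g k| ≤ C) : ‖g‖ ≤ C := by
  rw [← ZeroAtInftyContinuousMap.norm_toBCF_eq_norm]
  exact (BoundedContinuousFunction.norm_le hC).2 (by simpa [Real.norm_eq_abs] using h)

/-- the standard basis vector of c₀ -/
noncomputable def eb (n : ℕ) : C₀(ℕ, ℝ) :=
  ⟨⟨fun k => if k = n then 1 else 0, continuous_of_discreteTopology⟩, by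
    rw [cocompact_eq_atTop]
    refine tendsto_const_nhds.congr' ?_
    filter_upwards [eventually_gt_atTop n] with k hk
    simp [Nat.ne_of_gt hk]⟩

lemma eb_apply (n k : ℕ) : eb n k = if k = n then 1 else 0 := rfl

lemma norm_eb (n : ℕ) : ‖eb n‖ = 1 := by
  refine le_antisymm (norm_le_of _ zero_le_one fun k => ?_) ?_
  · rw [eb_apply]; split <;> simp
  · have := abs_apply_le_norm (eb n) n
    simpa [eb_apply] using this

/-- coordinate evaluation as a continuous linear functional -/
noncomputable def evCLM (k : ℕ) : C₀(ℕ, ℝ) →L[ℝ] ℝ :=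
  LinearMap.mkContinuous
    { toFun := fun g => g k
      map_add' := fun g h => by simp
      map_smul' := fun c g => by simp }
    1 (fun g => by simpa [Real.norm_eq_abs] using abs_apply_le_norm g k)

lemma evCLM_apply (k : ℕ) (g : C₀(ℕ, ℝ)) : evCLM k g = g k := rfl

lemma coe_sum (S : Finset ℕ) (h : ℕ → C₀(ℕ, ℝ)) (k : ℕ) :
    (∑ n ∈ S, h n) k = ∑ n ∈ S, h n k := by
  classical
  induction S using Finset.induction_on with
  | empty => simp
  | insert a s hn ih => simp_all [Finset.sum_insert hn]

lemma weakConv_eb : WeakConv eb 0 := by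
  intro f
  have key : ∀ S : Finset ℕ, ∑ n ∈ S, |f (eb n)| ≤ ‖f‖ := by
    intro S
    classical
    set c : ℕ → ℝ := fun n => if f (eb n) < 0 then -1 else 1 with hc
    have habs : ∀ n, c n * f (eb n) = |f (eb n)| := by
      intro n
      by_cases h : f (eb n) < 0
      · simp [hc, h, abs_of_neg h]
      · simp [hc, h, abs_of_nonneg (not_lt.1 h)]
    have hcb : ∀ n, |c n| ≤ 1 := by
      intro n; by_cases h : f (eb n) < 0 <;> simp [hc, h]
    set g : C₀(ℕ, ℝ) := ∑ n ∈ S, c n • eb n with hg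
    have hgk : ∀ k, |g k| ≤ 1 := by
      intro k
      have : g k = ∑ n ∈ S, c n * (if k = n then 1 else 0) := by
        rw [hg, coe_sum]; rfl
      rw [this]
      by_cases hk : k ∈ S
      · rw [Finset.sum_eq_single k (fun n _ hn => by simp [Ne.symm hn])
          (fun h => absurd hk h)]
        simpa using hcb k
      · rw [Finset.sum_eq_zero (fun n hn => by
          have : k ≠ n := fun h => hk (h ▸ hn)
          simp [this])]
        norm_num
    have hgnorm : ‖g‖ ≤ 1 := norm_le_of g zero_le_one hgk
    have hfg : f g = ∑ n ∈ S, |f (eb n)| := by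
      rw [hg, map_sum]
      exact Finset.sum_congr rfl fun n _ => by rw [map_smul]; exact habs n
    calc ∑ n ∈ S, |f (eb n)| = f g := hfg.symm
      _ ≤ ‖f‖ * ‖g‖ := le_trans (le_abs_self _) (by
          simpa [Real.norm_eq_abs] using f.le_opNorm g)
      _ ≤ ‖f‖ * 1 := by
          exact mul_le_mul_of_nonneg_left hgnorm (norm_nonneg f)
      _ = ‖f‖ := mul_one _
  have hsum : Summable fun n => |f (eb n)| :=
    summable_of_sum_le (fun n => abs_nonneg _) key
  have h0 : Tendsto (fun n => |f (eb n)|) atTop (𝓝 0) := hsum.tendsto_atTop_zero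
  have : Tendsto (fun n => f (eb n)) atTop (𝓝 0) := by
    refine squeeze_zero_norm (fun n => ?_) h0
    simp [Real.norm_eq_abs]
  simpa using this

end C0aux

open C0aux in
theorem stmt7 : Dmod C₀(ℕ, ℝ) = 1 := by
  have hub : ∀ d ∈ {d : ℝ | ∃ (x : ℕ → C₀(ℕ, ℝ)) (a : C₀(ℕ, ℝ)),
      (∀ n, ‖x n‖ = 1) ∧ WeakConv x a ∧
      d = Filter.liminf (fun n => ‖x n - a‖) atTop}, d ≤ 1 := by
    rintro d ⟨x, a, hx1, hw, rfl⟩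
    refine le_of_forall_pos_le_add fun ε hε => ?_
    -- find N with |a k| ≤ ε for k ≥ N
    have ha : Tendsto (⇑a) atTop (𝓝 0) := by
      have := a.zero_at_infty'
      rwa [cocompact_eq_atTop] at this
    obtain ⟨N, hN⟩ := (ha.eventually (Metric.ball_mem_nhds (0:ℝ) hε)).exists_forall_of_atTop
    -- eventually all coordinates below N are ε-close
    have hcoord : ∀ᶠ n in atTop, ∀ k ∈ Finset.range N, |x n k - a k| ≤ ε := by
      rw [eventually_all_finset]
      intro k _
      have h1 : Tendsto (fun n => x n k) atTop (𝓝 (a k)) := hw (evCLM k)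
      have := h1.eventually (Metric.closedBall_mem_nhds (a k) hε)
      simpa [Metric.mem_closedBall, Real.dist_eq] using this
    have hev : ∀ᶠ n in atTop, ‖x n - a‖ ≤ 1 + ε := by
      filter_upwards [hcoord] with n hn
      refine norm_le_of _ (by linarith) fun k => ?_
      have hxa : (x n - a) k = x n k - a k := by
        simp [ZeroAtInftyContinuousMap.coe_sub]
      rw [hxa]
      by_cases hk : k < N
      · have := hn k (Finset.mem_range.2 hk)
        linarith
      · have h1 : |x n k| ≤ 1 := by
          have := abs_apply_le_norm (x n) k
          rwa [hx1 n] at this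
        have h2 : |a k| ≤ ε := by
          have := hN k (not_lt.1 hk)
          simp [Metric.mem_ball, Real.dist_eq] at this
          linarith [this.le]
        have htri : |x n k - a k| ≤ |x n k| + |a k| := abs_sub (x n k) (a k)
        linarith
    refine liminf_le_of_frequently_le (hev.frequently) ?_
    exact isBoundedUnder_of ⟨0, fun n => norm_nonneg _⟩
  have hmem : (1:ℝ) ∈ {d : ℝ | ∃ (x : ℕ → C₀(ℕ, ℝ)) (a : C₀(ℕ, ℝ)),
      (∀ n, ‖x n‖ = 1) ∧ WeakConv x a ∧
      d = Filter.liminf (fun n => ‖x n - a‖) atTop} := by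
    refine ⟨eb, 0, norm_eb, weakConv_eb, ?_⟩
    simp [norm_eb, Filter.liminf_const]
  exact le_antisymm (Real.sSup_le hub zero_le_one) (le_csSup ⟨1, hub⟩ hmem)
end

section
/- Let X be a Banach space, (x_n) a sequence with x_n ⇀ 0 weakly, liminf_n ‖x_n‖ ≥ 1, and x ∈ X with ‖x‖ ≥ 1. If D(X) > 0, then liminf_n ‖x_n + x‖ ≥ 1/D(X). -/
open Filter Topology

/-- If `Dmod X > 0` then `Dmod X ≥ 1`: normalize a witness sequence. -/
lemma one_le_Dmod (X : Type*) [NormedAddCommGroup X] [NormedSpace ℝ X]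
    (hD : 0 < Dmod X) : 1 ≤ Dmod X := by
  set S : Set ℝ := {d : ℝ | ∃ (x : ℕ → X) (a : X), (∀ n, ‖x n‖ = 1) ∧ WeakConv x a ∧
    d = Filter.liminf (fun n => ‖x n - a‖) atTop} with hS
  have hDS : Dmod X = sSup S := rfl
  rw [hDS] at hD ⊢
  have hbdd : BddAbove S := by
    by_contra h
    rw [Real.sSup_of_not_bddAbove h] at hD
    exact lt_irrefl 0 hD
  have hne : S.Nonempty := by
    by_contra h
    rw [Set.not_nonempty_iff_eq_empty] at h
    rw [h, Real.sSup_empty] at hD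
    exact lt_irrefl 0 hD
  obtain ⟨d, hdS, hdpos⟩ : ∃ d ∈ S, 0 < d := by
    by_contra h
    push_neg at h
    have : sSup S ≤ 0 := csSup_le hne (fun d hd => h d hd)
    linarith
  obtain ⟨y, b, hy1, hyw, hdl⟩ := hdS
  have hbd : IsBoundedUnder (· ≥ ·) atTop (fun n => ‖y n - b‖) :=
    isBoundedUnder_of ⟨0, fun n => norm_nonneg _⟩
  have hev : ∀ᶠ n in atTop, d / 2 < ‖y n - b‖ := by
    have h2 : d / 2 < Filter.liminf (fun n => ‖y n - b‖) atTop := by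
      rw [← hdl]; linarith
    exact eventually_lt_of_lt_liminf h2 hbd
  classical
  set z : ℕ → X := fun n => if y n - b = 0 then y 0 else ‖y n - b‖⁻¹ • (y n - b) with hz
  have hz1 : ∀ n, ‖z n‖ = 1 := by
    intro n
    by_cases h : y n - b = 0
    · simp [hz, h, hy1 0]
    · simp only [hz, h, if_false]
      exact norm_smul_inv_norm h
  have hzw : WeakConv z 0 := by
    intro f
    rw [map_zero]
    have hf0 : Tendsto (fun n => f (y n - b)) atTop (𝓝 0) := by
      have h1 : Tendsto (fun n => f (y n) - f b) atTop (𝓝 (f b - f b)) :=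
        (hyw f).sub tendsto_const_nhds
      simpa [map_sub] using h1
    rw [tendsto_zero_iff_abs_tendsto_zero]
    apply squeeze_zero' (Eventually.of_forall fun n => abs_nonneg _)
      (g := fun n => (2 / d) * |f (y n - b)|)
    · filter_upwards [hev] with n hn
      have hne0 : y n - b ≠ 0 := by
        intro h0
        rw [h0, norm_zero] at hn
        linarith
      have : z n = ‖y n - b‖⁻¹ • (y n - b) := by simp [hz, hne0]
      rw [this, map_smul, smul_eq_mul, abs_mul, abs_inv, abs_norm]
      have hpos : (0:ℝ) < ‖y n - b‖ := by linarith
      have hinv : ‖y n - b‖⁻¹ ≤ 2 / d := by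
        rw [div_eq_mul_inv, ← one_div, one_div]
        have : (d/2)⁻¹ = 2 * d⁻¹ := by
          field_simp
        rw [← this]
        exact inv_anti₀ (by linarith) (le_of_lt hn)
      exact mul_le_mul_of_nonneg_right hinv (abs_nonneg _)
    · have := (hf0.abs).const_mul (2 / d)
      simpa using this
  have h1S : (1:ℝ) ∈ S := by
    refine ⟨z, 0, hz1, hzw, ?_⟩
    have hconst : (fun n => ‖z n - (0:X)‖) = fun _ => (1:ℝ) :=
      funext fun n => by simp [hz1 n]
    rw [hconst, liminf_const]
  exact le_csSup hbdd h1S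

theorem stmt18 (X : Type*) [NormedAddCommGroup X] [NormedSpace ℝ X] [CompleteSpace X]
    (x : ℕ → X) (a : X) (hw : WeakConv x 0)
    (hx : Filter.liminf (fun n => ‖x n‖) atTop ≥ 1) (ha : ‖a‖ ≥ 1)
    (hD : 0 < Dmod X) :
    Filter.liminf (fun n => ‖x n + a‖) atTop ≥ 1 / Dmod X := by
  -- Step 1: uniform bound on ‖x n‖ via Banach–Steinhaus in the double dual.
  obtain ⟨C, hC⟩ : ∃ C, ∀ n, ‖x n‖ ≤ C := by
    obtain ⟨C', hC'⟩ := banach_steinhaus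
      (g := fun n => NormedSpace.inclusionInDoubleDual ℝ X (x n)) (by
        intro f
        have h1 : Tendsto (fun n => ‖f (x n)‖) atTop (𝓝 ‖f (0:X)‖) := (hw f).norm
        obtain ⟨M, hM⟩ := h1.bddAbove_range
        refine ⟨M, fun n => ?_⟩
        exact hM ⟨n, rfl⟩)
    refine ⟨C', fun n => ?_⟩
    have hiso := (NormedSpace.inclusionInDoubleDualLi ℝ (E := X)).norm_map (x n)
    calc ‖x n‖ = ‖NormedSpace.inclusionInDoubleDual ℝ X (x n)‖ := hiso.symm
    _ ≤ C' := hC' n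
  -- coboundedness of the sequence of norms
  have hcob : IsCoboundedUnder (· ≥ ·) atTop (fun n => ‖x n + a‖) := by
    apply isCoboundedUnder_ge_of_eventually_le atTop (x := C + ‖a‖)
    filter_upwards with n
    calc ‖x n + a‖ ≤ ‖x n‖ + ‖a‖ := norm_add_le _ _
    _ ≤ C + ‖a‖ := by linarith [hC n]
  -- Step 2: liminf ‖x n + a‖ ≥ 1
  have hL1 : (1:ℝ) ≤ Filter.liminf (fun n => ‖x n + a‖) atTop := by
    have hane : a ≠ 0 := by
      intro h; rw [h, norm_zero] at ha; linarith
    obtain ⟨f, hf1, hfa⟩ := exists_dual_vector ℝ a (norm_ne_zero_iff.mpr hane)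
    refine le_of_forall_pos_le_add ?_
    intro ε hε
    have hlow : 1 - ε ≤ Filter.liminf (fun n => ‖x n + a‖) atTop := by
      refine le_liminf_of_le hcob ?_
      have hfx : Tendsto (fun n => f (x n)) atTop (𝓝 0) := by
        have := hw f; rwa [map_zero] at this
      have hev : ∀ᶠ n in atTop, |f (x n)| < ε :=
        (tendsto_zero_iff_abs_tendsto_zero _ |>.mp hfx).eventually (gt_mem_nhds hε)
      filter_upwards [hev] with n hn
      have h2 : f (x n + a) = f (x n) + ‖a‖ := by
        rw [map_add, hfa]; norm_num
      have h3 : f (x n + a) ≤ ‖x n + a‖ := by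
        calc f (x n + a) ≤ |f (x n + a)| := le_abs_self _
        _ = ‖f (x n + a)‖ := rfl
        _ ≤ ‖f‖ * ‖x n + a‖ := f.le_opNorm _
        _ = ‖x n + a‖ := by rw [hf1, one_mul]
      have h4 : 1 - ε ≤ f (x n + a) := by
        rw [h2]
        have := abs_lt.mp hn
        linarith
      linarith
    linarith
  -- Step 3: conclude using Dmod X ≥ 1
  have hD1 := one_le_Dmod X hD
  have : 1 / Dmod X ≤ 1 := by
    rw [div_le_one hD]; exact hD1
  linarith
end
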